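/- If f ∈ L^q(D, 𝔹) with q > 2, then T_𝔹(f) is Hölder continuous of order α = (q−2)/q on the closed unit disk, i.e., there exists C > 0 with ‖T_𝔹(f)(z) − T_𝔹(f)(w)‖_𝔹 ≤ C|z − w|^α for all z, w ∈ D̄. -/

import Mathlib

open MeasureTheory Filter Topology Set
open scoped ENNReal NNReal

noncomputable section

/-- The open unit disk in `ℂ`. -/
def 𝔻 : Set ℂ := Metric.ball 0 1

/-- The bicomplex norm of the bicomplex number with idempotent components `a`, `b`:
`‖p⁺a + p⁻b‖_𝔹 = √((|a|² + |b|²)/2)`. -/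
def bnorm (a b : ℂ) : ℝ := Real.sqrt ((‖a‖ ^ 2 + ‖b‖ ^ 2) / 2)

/-- The Wirtinger derivative `∂g/∂z = (1/2)(∂g/∂x − i ∂g/∂y)`. -/
def wirt (g : ℂ → ℂ) (z : ℂ) : ℂ :=
  (fderiv ℝ g z 1 - Complex.I * fderiv ℝ g z Complex.I) / 2

/-- The Wirtinger derivative `∂g/∂z̄ = (1/2)(∂g/∂x + i ∂g/∂y)`. -/
def wirtBar (g : ℂ → ℂ) (z : ℂ) : ℂ :=
  (fderiv ℝ g z 1 + Complex.I * fderiv ℝ g z Complex.I) / 2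

/-- The Cauchy–Pompeiu operator `T(g)(z) = −(1/π)∬_D g(ζ)/(ζ − z)`. -/
def T (g : ℂ → ℂ) (z : ℂ) : ℂ := -(1 / Real.pi : ℝ) • ∫ ζ in 𝔻, g ζ / (ζ - z)

/-- The plus idempotent component of the bicomplex Theodorescu operator:
`(T((g)*))*`, i.e. `z ↦ −(1/π)∬_D g(ζ)/(ζ* − z*)`. -/
def Tp (g : ℂ → ℂ) (z : ℂ) : ℂ :=
  (starRingEnd ℂ) (T (fun ζ => (starRingEnd ℂ) (g ζ)) z)

/-- The point `r e^{iθ}`. -/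
def circ (r θ : ℝ) : ℂ := (r : ℂ) * Complex.exp ((θ : ℂ) * Complex.I)

/-- Finiteness of the bicomplex Hardy `p`-norm of the function with idempotent
components `fp`, `fm`. -/
def HardyFinB (p : ℝ) (fp fm : ℂ → ℂ) : Prop :=
  ∃ M : ℝ, ∀ r ∈ Set.Ioo (0 : ℝ) 1,
    (∫ θ in Set.Ioo 0 (2 * Real.pi), bnorm (fp (circ r θ)) (fm (circ r θ)) ^ p) ≤ M

/-- `𝔹`-holomorphy (`∂̄f = 0`) of the function with idempotent components `fp`, `fm`:
the components are real-differentiable on `𝔻` and satisfy `∂f⁺/∂z = 0`, `∂f⁻/∂z̄ = 0`. -/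
def BHolo (fp fm : ℂ → ℂ) : Prop :=
  ∀ z ∈ 𝔻, DifferentiableAt ℝ fp z ∧ DifferentiableAt ℝ fm z ∧
    wirt fp z = 0 ∧ wirtBar fm z = 0

/-- Membership in the classical holomorphic Hardy space `H^p(D)`. -/
def MemHp (p : ℝ) (g : ℂ → ℂ) : Prop :=
  DifferentiableOn ℂ g 𝔻 ∧
  ∃ M : ℝ, ∀ r ∈ Set.Ioo (0 : ℝ) 1,
    (∫ θ in Set.Ioo 0 (2 * Real.pi), ‖g (circ r θ)‖ ^ p) ≤ M

lemma ofReal_norm_eq_coe_nnnorm {E : Type*} [SeminormedAddGroup E] (a : E) :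
    ENNReal.ofReal ‖a‖ = (‖a‖₊ : ℝ≥0∞) := ofReal_norm_eq_enorm a

lemma shell_bound {t : ℝ} (ht : t ≤ 0) (c : ℂ) {a b : ℝ} (ha : 0 < a) :
    ∫⁻ ζ in Metric.ball c b \ Metric.ball c a, (‖ζ - c‖₊ : ℝ≥0∞) ^ t
      ≤ ENNReal.ofReal (a ^ t) * volume (Metric.ball c b) := by
  have hmeas : MeasurableSet (Metric.ball c b \ Metric.ball c a) :=
    measurableSet_ball.diff measurableSet_ball
  have hpt : ∀ ζ ∈ Metric.ball c b \ Metric.ball c a,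
      (‖ζ - c‖₊ : ℝ≥0∞) ^ t ≤ ENNReal.ofReal (a ^ t) := by
    intro ζ hζ
    have h1 : a ≤ ‖ζ - c‖ := by
      have := hζ.2
      simpa [Metric.mem_ball, Complex.dist_eq, not_lt] using this
    have h2 : ENNReal.ofReal a ≤ (‖ζ - c‖₊ : ℝ≥0∞) := by
      rw [← ofReal_norm_eq_coe_nnnorm]; exact ENNReal.ofReal_le_ofReal h1
    calc (‖ζ - c‖₊ : ℝ≥0∞) ^ t = ((‖ζ - c‖₊ : ℝ≥0∞) ^ (-t))⁻¹ := by
          rw [← ENNReal.rpow_neg, neg_neg]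
      _ ≤ ((ENNReal.ofReal a) ^ (-t))⁻¹ :=
          ENNReal.inv_le_inv.mpr (ENNReal.rpow_le_rpow h2 (by linarith))
      _ = (ENNReal.ofReal a) ^ t := by rw [← ENNReal.rpow_neg, neg_neg]
      _ = ENNReal.ofReal (a ^ t) := ENNReal.ofReal_rpow_of_pos ha
  calc ∫⁻ ζ in Metric.ball c b \ Metric.ball c a, (‖ζ - c‖₊ : ℝ≥0∞) ^ t
      ≤ ∫⁻ _ζ in Metric.ball c b \ Metric.ball c a, ENNReal.ofReal (a ^ t) :=
        setLIntegral_mono' hmeas hpt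
    _ = ENNReal.ofReal (a ^ t) * volume (Metric.ball c b \ Metric.ball c a) :=
        setLIntegral_const _ _
    _ ≤ ENNReal.ofReal (a ^ t) * volume (Metric.ball c b) := by
        gcongr; exact diff_subset

lemma rpow_pow_comm {x : ℝ} (hx : 0 < x) (s : ℝ) (n : ℕ) : (x ^ n) ^ s = (x ^ s) ^ n := by
  rw [← Real.rpow_natCast x n, ← Real.rpow_mul hx.le, mul_comm, Real.rpow_mul hx.le,
    Real.rpow_natCast]

lemma shells_bound {t : ℝ} (ht : t ≤ 0) (c : ℂ) (u : ℕ → ℝ) (hu : ∀ n, 0 < u n) :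
    ∫⁻ ζ in ⋃ n, (Metric.ball c (2 * u n) \ Metric.ball c (u n)), (‖ζ - c‖₊ : ℝ≥0∞) ^ t
      ≤ (∑' n, ENNReal.ofReal (4 * u n ^ (t + 2))) * volume (Metric.ball (0:ℂ) 1) := by
  calc ∫⁻ ζ in ⋃ n, (Metric.ball c (2 * u n) \ Metric.ball c (u n)), (‖ζ - c‖₊ : ℝ≥0∞) ^ t
      ≤ ∑' n, ∫⁻ ζ in Metric.ball c (2 * u n) \ Metric.ball c (u n), (‖ζ - c‖₊ : ℝ≥0∞) ^ t :=
        lintegral_iUnion_le _ _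
    _ ≤ ∑' n, ENNReal.ofReal (4 * u n ^ (t + 2)) * volume (Metric.ball (0:ℂ) 1) := by
        refine ENNReal.tsum_le_tsum fun n => ?_
        refine (shell_bound ht c (hu n)).trans ?_
        rw [Measure.addHaar_ball _ _ (by nlinarith [hu n] : (0:ℝ) ≤ 2 * u n), ← mul_assoc,
          ← ENNReal.ofReal_mul (Real.rpow_nonneg (hu n).le _)]
        refine mul_le_mul_left (ENNReal.ofReal_le_ofReal ?_) _
        rw [Complex.finrank_real_complex]
        have h1 : (2 * u n) ^ (2:ℕ) = 4 * u n ^ (2:ℕ) := by ring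
        have h2 : u n ^ t * (4 * u n ^ (2:ℕ)) = 4 * (u n ^ t * u n ^ ((2:ℕ):ℝ)) := by
          rw [Real.rpow_natCast]; ring
        rw [h1, h2, ← Real.rpow_add (hu n)]
        norm_num
    _ = _ := ENNReal.tsum_mul_right

lemma key1 {t : ℝ} (ht1 : -2 < t) (ht0 : t < 0) :
    ∃ C : ℝ≥0∞, C ≠ ∞ ∧ ∀ (c : ℂ) (R : ℝ), 0 < R →
      ∫⁻ ζ in Metric.ball c R, (‖ζ - c‖₊ : ℝ≥0∞) ^ t ≤ C * ENNReal.ofReal (R ^ (t + 2)) := by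
  set r : ℝ := (2:ℝ) ^ (-(t+2)) with hrdef
  have hr0 : 0 < r := Real.rpow_pos_of_pos two_pos _
  have hr1 : r < 1 := Real.rpow_lt_one_of_one_lt_of_neg one_lt_two (by linarith)
  have hoR : ENNReal.ofReal r < 1 := ENNReal.ofReal_lt_one.mpr hr1
  refine ⟨ENNReal.ofReal 4 * (1 - ENNReal.ofReal r)⁻¹ * volume (Metric.ball (0:ℂ) 1), ?_, ?_⟩
  · exact ENNReal.mul_ne_top (ENNReal.mul_ne_top ENNReal.ofReal_ne_top
      (ENNReal.inv_ne_top.mpr (tsub_pos_of_lt hoR).ne'))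
      measure_ball_lt_top.ne
  intro c R hR
  set u : ℕ → ℝ := fun n => R / 2 ^ (n+1) with hudef
  have hu0 : ∀ n, 0 < u n := fun n => by positivity
  have h2u : ∀ n, 2 * u n = R / 2 ^ n := by
    intro n; simp only [hudef]; rw [pow_succ]; field_simp
  have hcover : Metric.ball c R ⊆ {c} ∪ ⋃ n, (Metric.ball c (2 * u n) \ Metric.ball c (u n)) := by
    intro x hx
    rcases eq_or_ne x c with h | h
    · exact Or.inl h
    · right
      have hd0 : 0 < dist x c := dist_pos.mpr h
      have hdR : dist x c < R := Metric.mem_ball.mp hx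
      have hex : ∃ n : ℕ, R / 2 ^ (n+1) ≤ dist x c := by
        obtain ⟨n, hn⟩ := pow_unbounded_of_one_lt (R / dist x c) (one_lt_two (α := ℝ))
        refine ⟨n, ?_⟩
        rw [div_le_iff₀ (by positivity)]
        rw [div_lt_iff₀ hd0] at hn
        have h2 : (0:ℝ) < 2 ^ n := by positivity
        have : (2:ℝ) ^ (n+1) = 2 ^ n * 2 := pow_succ 2 n
        nlinarith
      set n₀ := Nat.find hex with hn₀
      have hspec : R / 2 ^ (n₀+1) ≤ dist x c := Nat.find_spec hex
      have hlt : dist x c < R / 2 ^ n₀ := by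
        rcases Nat.eq_zero_or_pos n₀ with h0 | hpos
        · rw [h0]; simpa using hdR
        · obtain ⟨m, hm⟩ := Nat.exists_eq_succ_of_ne_zero hpos.ne'
          have := Nat.find_min hex (hn₀ ▸ hm ▸ m.lt_succ_self)
          rw [hm]; exact lt_of_not_ge this
      refine mem_iUnion.mpr ⟨n₀, ?_, ?_⟩
      · rw [Metric.mem_ball, h2u]; exact hlt
      · rw [Metric.mem_ball]; exact not_lt.mpr hspec
  calc ∫⁻ ζ in Metric.ball c R, (‖ζ - c‖₊ : ℝ≥0∞) ^ t
      ≤ ∫⁻ ζ in {c} ∪ ⋃ n, (Metric.ball c (2 * u n) \ Metric.ball c (u n)),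
          (‖ζ - c‖₊ : ℝ≥0∞) ^ t := lintegral_mono_set hcover
    _ ≤ (∫⁻ ζ in ({c} : Set ℂ), (‖ζ - c‖₊ : ℝ≥0∞) ^ t)
        + ∫⁻ ζ in ⋃ n, (Metric.ball c (2 * u n) \ Metric.ball c (u n)),
          (‖ζ - c‖₊ : ℝ≥0∞) ^ t := lintegral_union_le _ _ _
    _ = ∫⁻ ζ in ⋃ n, (Metric.ball c (2 * u n) \ Metric.ball c (u n)),
          (‖ζ - c‖₊ : ℝ≥0∞) ^ t := by
        rw [setLIntegral_measure_zero _ _ (measure_singleton c), zero_add]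
    _ ≤ (∑' n, ENNReal.ofReal (4 * u n ^ (t + 2))) * volume (Metric.ball (0:ℂ) 1) :=
        shells_bound ht0.le c u hu0
    _ ≤ (∑' n, ENNReal.ofReal (4 * R ^ (t+2)) * ENNReal.ofReal r ^ n) *
          volume (Metric.ball (0:ℂ) 1) := by
        gcongr with n
        rw [← ENNReal.ofReal_pow hr0.le, ← ENNReal.ofReal_mul (by positivity)]
        apply ENNReal.ofReal_le_ofReal
        have hun : u n ^ (t+2) = R ^ (t+2) * r ^ (n+1) := by
          simp only [hudef]
          rw [Real.div_rpow hR.le (by positivity), rpow_pow_comm two_pos,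
            div_eq_mul_inv, ← inv_pow, ← Real.rpow_neg two_pos.le]
        have hrmono : r ^ (n+1) ≤ r ^ n := pow_le_pow_of_le_one hr0.le hr1.le (Nat.le_succ n)
        have hRs : 0 ≤ R ^ (t+2) := Real.rpow_nonneg hR.le _
        rw [hun]; nlinarith [pow_nonneg hr0.le (n+1)]
    _ ≤ (ENNReal.ofReal 4 * (1 - ENNReal.ofReal r)⁻¹ * volume (Metric.ball (0:ℂ) 1)) *
          ENNReal.ofReal (R ^ (t+2)) := by
        rw [ENNReal.tsum_mul_left, ENNReal.tsum_geometric,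
          ENNReal.ofReal_mul (by norm_num : (0:ℝ) ≤ 4)]
        exact le_of_eq (by ring)

lemma key2 {t : ℝ} (ht : t < -2) :
    ∃ C : ℝ≥0∞, C ≠ ∞ ∧ ∀ (c : ℂ) (R : ℝ), 0 < R →
      ∫⁻ ζ in (Metric.ball c R)ᶜ, (‖ζ - c‖₊ : ℝ≥0∞) ^ t ≤ C * ENNReal.ofReal (R ^ (t + 2)) := by
  set r : ℝ := (2:ℝ) ^ (t+2) with hrdef
  have hr0 : 0 < r := Real.rpow_pos_of_pos two_pos _
  have hr1 : r < 1 := Real.rpow_lt_one_of_one_lt_of_neg one_lt_two (by linarith)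
  have hoR : ENNReal.ofReal r < 1 := ENNReal.ofReal_lt_one.mpr hr1
  refine ⟨ENNReal.ofReal 4 * (1 - ENNReal.ofReal r)⁻¹ * volume (Metric.ball (0:ℂ) 1), ?_, ?_⟩
  · exact ENNReal.mul_ne_top (ENNReal.mul_ne_top ENNReal.ofReal_ne_top
      (ENNReal.inv_ne_top.mpr (tsub_pos_of_lt hoR).ne'))
      measure_ball_lt_top.ne
  intro c R hR
  set u : ℕ → ℝ := fun n => R * 2 ^ n with hudef
  have hu0 : ∀ n, 0 < u n := fun n => by positivity
  have hcover : (Metric.ball c R)ᶜ ⊆ ⋃ n, (Metric.ball c (2 * u n) \ Metric.ball c (u n)) := by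
    intro x hx
    have hdR : R ≤ dist x c := by
      have := hx; rw [mem_compl_iff, Metric.mem_ball, not_lt] at this; exact this
    have hd0 : 0 < dist x c := lt_of_lt_of_le hR hdR
    have hex : ∃ n : ℕ, dist x c < R * 2 ^ (n+1) := by
      obtain ⟨n, hn⟩ := pow_unbounded_of_one_lt (dist x c / R) (one_lt_two (α := ℝ))
      refine ⟨n, ?_⟩
      rw [div_lt_iff₀ hR] at hn
      have h2 : (0:ℝ) < 2 ^ n := by positivity
      have : (2:ℝ) ^ (n+1) = 2 ^ n * 2 := pow_succ 2 n
      nlinarith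
    set n₀ := Nat.find hex with hn₀
    have hspec : dist x c < R * 2 ^ (n₀+1) := Nat.find_spec hex
    have hge : R * 2 ^ n₀ ≤ dist x c := by
      rcases Nat.eq_zero_or_pos n₀ with h0 | hpos
      · rw [h0]; simpa using hdR
      · obtain ⟨m, hm⟩ := Nat.exists_eq_succ_of_ne_zero hpos.ne'
        have := Nat.find_min hex (hn₀ ▸ hm ▸ m.lt_succ_self)
        rw [hm]; exact not_lt.mp this
    refine mem_iUnion.mpr ⟨n₀, ?_, ?_⟩
    · rw [Metric.mem_ball]
      have : 2 * u n₀ = R * 2 ^ (n₀+1) := by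
        simp only [hudef]; rw [pow_succ]; ring
      rw [this]; exact hspec
    · rw [Metric.mem_ball]; exact not_lt.mpr hge
  calc ∫⁻ ζ in (Metric.ball c R)ᶜ, (‖ζ - c‖₊ : ℝ≥0∞) ^ t
      ≤ ∫⁻ ζ in ⋃ n, (Metric.ball c (2 * u n) \ Metric.ball c (u n)),
          (‖ζ - c‖₊ : ℝ≥0∞) ^ t := lintegral_mono_set hcover
    _ ≤ (∑' n, ENNReal.ofReal (4 * u n ^ (t + 2))) * volume (Metric.ball (0:ℂ) 1) :=
        shells_bound (by linarith) c u hu0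
    _ ≤ (∑' n, ENNReal.ofReal (4 * R ^ (t+2)) * ENNReal.ofReal r ^ n) *
          volume (Metric.ball (0:ℂ) 1) := by
        gcongr with n
        rw [← ENNReal.ofReal_pow hr0.le, ← ENNReal.ofReal_mul (by positivity)]
        apply ENNReal.ofReal_le_ofReal
        have hun : u n ^ (t+2) = R ^ (t+2) * r ^ n := by
          simp only [hudef]
          rw [Real.mul_rpow hR.le (by positivity), rpow_pow_comm two_pos]
        rw [hun, mul_assoc]
    _ ≤ (ENNReal.ofReal 4 * (1 - ENNReal.ofReal r)⁻¹ * volume (Metric.ball (0:ℂ) 1)) *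
          ENNReal.ofReal (R ^ (t+2)) := by
        rw [ENNReal.tsum_mul_left, ENNReal.tsum_geometric,
          ENNReal.ofReal_mul (by norm_num : (0:ℝ) ≤ 4)]
        exact le_of_eq (by ring)

lemma enorm_inv_le (u : ℂ) : ENNReal.ofReal ‖u⁻¹‖ ≤ (‖u‖₊ : ℝ≥0∞) ^ (-1:ℝ) := by
  rcases eq_or_ne u 0 with h | h
  · simp [h]
  · rw [ENNReal.rpow_neg_one, ofReal_norm_eq_coe_nnnorm, nnnorm_inv,
      ENNReal.coe_inv (nnnorm_ne_zero_iff.mpr h)]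

lemma measurable_kernel (z : ℂ) (e : ℝ) :
    Measurable (fun ζ : ℂ => (‖ζ - z‖₊ : ℝ≥0∞) ^ e) := by
  apply Measurable.pow_const
  exact ((measurable_id.sub_const z).nnnorm).coe_nnreal_ennreal

lemma holder_piece {q q' : ℝ} (hpq : q.HolderConjugate q') {g : ℂ → ℂ} (hg : Measurable g)
    {S : Set ℂ} (hS : S ⊆ 𝔻) (k : ℂ → ℝ≥0∞) (hk : Measurable k) :
    ∫⁻ ζ in S, (‖g ζ‖₊ : ℝ≥0∞) * k ζ
      ≤ (∫⁻ ζ in 𝔻, (‖g ζ‖₊ : ℝ≥0∞) ^ q) ^ (1/q) * (∫⁻ ζ in S, k ζ ^ q') ^ (1/q') := by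
  calc ∫⁻ ζ in S, (‖g ζ‖₊ : ℝ≥0∞) * k ζ
      ≤ (∫⁻ ζ in S, (‖g ζ‖₊ : ℝ≥0∞) ^ q) ^ (1/q) * (∫⁻ ζ in S, k ζ ^ q') ^ (1/q') :=
        ENNReal.lintegral_mul_le_Lp_mul_Lq _ hpq
          (hg.nnnorm.coe_nnreal_ennreal.aemeasurable) hk.aemeasurable
    _ ≤ _ := by
        gcongr
        · exact hpq.one_div_nonneg

lemma Tdiff_core {q : ℝ} (hq : 2 < q) {g : ℂ → ℂ} (hg : Measurable g)
    (hI : (∫⁻ ζ in 𝔻, (‖g ζ‖₊ : ℝ≥0∞) ^ q) ≠ ∞) :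
    ∃ C : ℝ, 0 < C ∧ ∀ z ∈ Metric.closedBall (0:ℂ) 1, ∀ w ∈ Metric.closedBall (0:ℂ) 1,
      ‖T g z - T g w‖ ≤ C * ‖z - w‖ ^ ((q - 2) / q) := by
  have hq1 : 1 < q := by linarith
  set q' : ℝ := q / (q - 1) with hq'def
  have hpq : q.HolderConjugate q' := Real.HolderConjugate.conjExponent hq1
  have hq'1 : 1 < q' := hpq.symm.lt
  have hq'0 : 0 < q' := by linarith
  have hq'2 : q' < 2 := by
    rw [hq'def, div_lt_iff₀ (by linarith)]; linarith
  set α : ℝ := (q - 2) / q with hαdef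
  have hα0 : 0 < α := by apply div_pos <;> linarith
  obtain ⟨C₁, hC₁top, hC₁⟩ := key1 (t := -q') (by linarith) (by linarith)
  obtain ⟨C₂, hC₂top, hC₂⟩ := key2 (t := -(2*q')) (by linarith)
  set G : ℝ≥0∞ := (∫⁻ ζ in 𝔻, (‖g ζ‖₊ : ℝ≥0∞) ^ q) ^ (1/q) with hGdef
  have hGtop : G ≠ ∞ := ENNReal.rpow_ne_top_of_nonneg (by positivity) hI
  have hqne : q ≠ 0 := by linarith
  have hq1ne : q - 1 ≠ 0 := by linarith
  have hexp1 : (-q' + 2) * (1/q') = α := by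
    rw [hαdef, hq'def]; field_simp; ring
  have hexp2 : 1 + (-(2*q') + 2) * (1/q') = α := by
    rw [hαdef, hq'def]; field_simp; ring
  set Ctot : ℝ≥0∞ := G * (C₁ ^ (1/q') * ENNReal.ofReal ((2:ℝ) ^ α)
      + C₁ ^ (1/q') * ENNReal.ofReal ((3:ℝ) ^ α)
      + C₂ ^ (1/q') * ENNReal.ofReal ((2:ℝ) ^ α)) with hCtotdef
  have hCtotTop : Ctot ≠ ∞ := by
    apply ENNReal.mul_ne_top hGtop
    have h1 : C₁ ^ (1/q') ≠ ∞ := ENNReal.rpow_ne_top_of_nonneg (by positivity) hC₁top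
    have h2 : C₂ ^ (1/q') ≠ ∞ := ENNReal.rpow_ne_top_of_nonneg (by positivity) hC₂top
    exact ENNReal.add_ne_top.mpr ⟨ENNReal.add_ne_top.mpr
      ⟨ENNReal.mul_ne_top h1 ENNReal.ofReal_ne_top, ENNReal.mul_ne_top h1 ENNReal.ofReal_ne_top⟩,
      ENNReal.mul_ne_top h2 ENNReal.ofReal_ne_top⟩
  refine ⟨(1/Real.pi) * Ctot.toReal + 1, by positivity, ?_⟩
  intro z hz w hw
  -- integrability of the integrand
  have hIntegrand : ∀ v : ℂ, v ∈ Metric.closedBall (0:ℂ) 1 →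
      IntegrableOn (fun ζ => g ζ / (ζ - v)) 𝔻 := by
    intro v hv
    have hsub : 𝔻 ⊆ Metric.ball v 2 := by
      intro ζ hζ
      have h1 : ‖ζ‖ < 1 := by simpa [𝔻, Metric.mem_ball] using hζ
      have h2 : ‖v‖ ≤ 1 := by simpa [Metric.mem_closedBall] using hv
      rw [Metric.mem_ball, dist_eq_norm]
      calc ‖ζ - v‖ ≤ ‖ζ‖ + ‖v‖ := norm_sub_le _ _
        _ < 2 := by linarith
    constructor
    · exact (hg.div (measurable_id.sub_const v)).aestronglyMeasurable
    · show (∫⁻ ζ in 𝔻, (‖g ζ / (ζ - v)‖₊ : ℝ≥0∞)) < ∞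
      have hpt : ∀ ζ : ℂ, (‖g ζ / (ζ - v)‖₊ : ℝ≥0∞)
          ≤ (‖g ζ‖₊ : ℝ≥0∞) * (‖ζ - v‖₊ : ℝ≥0∞) ^ (-1:ℝ) := by
        intro ζ
        rw [div_eq_mul_inv, nnnorm_mul, ENNReal.coe_mul,
          ← ofReal_norm_eq_coe_nnnorm ((ζ - v)⁻¹)]
        exact mul_le_mul_right (enorm_inv_le _) _
      calc (∫⁻ ζ in 𝔻, (‖g ζ / (ζ - v)‖₊ : ℝ≥0∞))
          ≤ ∫⁻ ζ in 𝔻, (‖g ζ‖₊ : ℝ≥0∞) * (‖ζ - v‖₊ : ℝ≥0∞) ^ (-1:ℝ) :=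
            lintegral_mono hpt
        _ ≤ G * (∫⁻ ζ in 𝔻, ((‖ζ - v‖₊ : ℝ≥0∞) ^ (-1:ℝ)) ^ q') ^ (1/q') :=
            holder_piece hpq hg subset_rfl _ (measurable_kernel v (-1))
        _ ≤ G * (C₁ * ENNReal.ofReal ((2:ℝ) ^ (-q' + 2))) ^ (1/q') := by
            refine mul_le_mul_right (ENNReal.rpow_le_rpow ?_ (by positivity)) G
            calc ∫⁻ ζ in 𝔻, ((‖ζ - v‖₊ : ℝ≥0∞) ^ (-1:ℝ)) ^ q'
                = ∫⁻ ζ in 𝔻, (‖ζ - v‖₊ : ℝ≥0∞) ^ (-q') := by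
                  apply lintegral_congr; intro ζ
                  rw [← ENNReal.rpow_mul, neg_one_mul]
              _ ≤ ∫⁻ ζ in Metric.ball v 2, (‖ζ - v‖₊ : ℝ≥0∞) ^ (-q') :=
                  lintegral_mono_set hsub
              _ ≤ C₁ * ENNReal.ofReal ((2:ℝ) ^ (-q' + 2)) := hC₁ v 2 two_pos
        _ < ∞ := by
            apply ENNReal.mul_lt_top hGtop.lt_top
            exact (ENNReal.rpow_ne_top_of_nonneg (by positivity)
              (ENNReal.mul_ne_top hC₁top ENNReal.ofReal_ne_top)).lt_top
  rcases eq_or_ne z w with rfl | hzw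
  · simp [Real.zero_rpow (by positivity : ((q-2)/q : ℝ) ≠ 0), Real.zero_rpow hα0.ne']
  set d : ℝ := ‖z - w‖ with hddef
  have hd0 : 0 < d := norm_pos_iff.mpr (sub_ne_zero.mpr hzw)
  set kz : ℂ → ℝ≥0∞ := fun ζ => (‖ζ - z‖₊ : ℝ≥0∞) ^ (-1:ℝ) with hkzdef
  set kw : ℂ → ℝ≥0∞ := fun ζ => (‖ζ - w‖₊ : ℝ≥0∞) ^ (-1:ℝ) with hkwdef
  set kern : ℂ → ℝ≥0∞ := fun ζ => ENNReal.ofReal ‖(ζ - z)⁻¹ - (ζ - w)⁻¹‖ with hkerndef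
  set B : Set ℂ := Metric.ball z (2*d) with hBdef
  -- Step A : reduce to a lintegral
  have hstepA : ‖T g z - T g w‖
      ≤ (1/Real.pi) * (∫⁻ ζ in 𝔻, (‖g ζ‖₊ : ℝ≥0∞) * kern ζ).toReal := by
    have h1 : T g z - T g w
        = -(1 / Real.pi : ℝ) • ∫ ζ in 𝔻, (g ζ / (ζ - z) - g ζ / (ζ - w)) := by
      rw [T, T, ← smul_sub, integral_sub (hIntegrand z hz) (hIntegrand w hw)]
    rw [h1, norm_smul]
    have h2 : ‖-(1 / Real.pi : ℝ)‖ = 1/Real.pi := by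
      rw [Real.norm_eq_abs, abs_neg, abs_of_nonneg (by positivity)]
    rw [h2]
    refine mul_le_mul_of_nonneg_left ?_ (by positivity)
    refine (norm_integral_le_lintegral_norm _).trans (le_of_eq ?_)
    congr 1
    apply lintegral_congr; intro ζ
    rw [div_eq_mul_inv, div_eq_mul_inv, ← mul_sub, norm_mul,
      ENNReal.ofReal_mul (norm_nonneg _), ofReal_norm_eq_coe_nnnorm]
  -- pointwise bounds on the kernel
  have hkern_le : ∀ ζ, kern ζ ≤ kz ζ + kw ζ := by
    intro ζ
    refine le_trans (ENNReal.ofReal_le_ofReal (norm_sub_le _ _)) ?_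
    refine le_trans ENNReal.ofReal_add_le ?_
    exact add_le_add (enorm_inv_le _) (enorm_inv_le _)
  have hkern_far : ∀ ζ ∈ 𝔻 \ B, kern ζ ≤ ENNReal.ofReal (2*d) * (‖ζ - z‖₊ : ℝ≥0∞) ^ (-2:ℝ) := by
    intro ζ hζ
    have hu : 2*d ≤ ‖ζ - z‖ := by
      have := hζ.2
      rw [hBdef, Metric.mem_ball, dist_eq_norm, not_lt] at this
      exact this
    have hu0 : 0 < ‖ζ - z‖ := by linarith
    have hv0 : 0 < ‖ζ - w‖ := by
      have : ‖ζ - z‖ ≤ ‖ζ - w‖ + ‖z - w‖ := by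
        calc ‖ζ - z‖ = ‖(ζ - w) - (z - w)‖ := by congr 1; ring
          _ ≤ ‖ζ - w‖ + ‖z - w‖ := norm_sub_le _ _
      linarith
    have hvz : ‖ζ - z‖ - d ≤ ‖ζ - w‖ := by
      have : ‖ζ - z‖ ≤ ‖ζ - w‖ + ‖z - w‖ := by
        calc ‖ζ - z‖ = ‖(ζ - w) - (z - w)‖ := by congr 1; ring
          _ ≤ ‖ζ - w‖ + ‖z - w‖ := norm_sub_le _ _
      linarith
    have hune : (ζ - z) ≠ 0 := by
      intro h; rw [h, norm_zero] at hu0; exact lt_irrefl _ hu0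
    have hvne : (ζ - w) ≠ 0 := by
      intro h; rw [h, norm_zero] at hv0; exact lt_irrefl _ hv0
    have hident : (ζ - z)⁻¹ - (ζ - w)⁻¹ = (z - w) * ((ζ - z)⁻¹ * (ζ - w)⁻¹) := by
      field_simp; ring
    have hreal : ‖(ζ - z)⁻¹ - (ζ - w)⁻¹‖ ≤ 2*d * ‖ζ - z‖ ^ (-2:ℝ) := by
      rw [hident, norm_mul, norm_mul, norm_inv, norm_inv]
      have h3 : ‖ζ - w‖⁻¹ ≤ 2 * ‖ζ - z‖⁻¹ := by
        have h30 : ‖ζ - z‖ / 2 ≤ ‖ζ - w‖ := by linarith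
        calc ‖ζ - w‖⁻¹ ≤ (‖ζ - z‖ / 2)⁻¹ := by
              rw [← one_div, ← one_div]
              exact one_div_le_one_div_of_le (by positivity) h30
          _ = 2 * ‖ζ - z‖⁻¹ := by rw [inv_div, div_eq_mul_inv, mul_comm]
      have h4 : ‖ζ - z‖ ^ (-2:ℝ) = ‖ζ - z‖⁻¹ * ‖ζ - z‖⁻¹ := by
        rw [show (-2:ℝ) = -((2:ℕ):ℝ) by norm_num, Real.rpow_neg hu0.le,
          Real.rpow_natCast, pow_two, mul_inv]
      rw [h4]
      have h5 : ‖z - w‖ = d := rfl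
      rw [h5]
      have h6 : 0 ≤ ‖ζ - z‖⁻¹ := by positivity
      nlinarith [mul_le_mul_of_nonneg_left h3 (mul_nonneg hd0.le h6)]
    calc kern ζ ≤ ENNReal.ofReal (2*d * ‖ζ - z‖ ^ (-2:ℝ)) := ENNReal.ofReal_le_ofReal hreal
      _ = ENNReal.ofReal (2*d) * (‖ζ - z‖₊ : ℝ≥0∞) ^ (-2:ℝ) := by
          rw [ENNReal.ofReal_mul (by positivity), ← ofReal_norm_eq_coe_nnnorm,
            ENNReal.ofReal_rpow_of_pos hu0]
  -- Hölder bounds for the three pieces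
  have hq'inv : (0:ℝ) ≤ 1/q' := by positivity
  have hmeasB : MeasurableSet B := Metric.isOpen_ball.measurableSet
  have hmeasD : MeasurableSet (𝔻 \ B) :=
    (Metric.isOpen_ball.measurableSet).diff hmeasB
  have hPz : ∫⁻ ζ in 𝔻 ∩ B, (‖g ζ‖₊ : ℝ≥0∞) * kz ζ
      ≤ G * (C₁ * ENNReal.ofReal ((2*d) ^ (-q' + 2))) ^ (1/q') := by
    refine (holder_piece hpq hg inter_subset_left _ (measurable_kernel z (-1))).trans ?_
    refine mul_le_mul_right (ENNReal.rpow_le_rpow ?_ hq'inv) G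
    calc ∫⁻ ζ in 𝔻 ∩ B, (kz ζ) ^ q'
        = ∫⁻ ζ in 𝔻 ∩ B, (‖ζ - z‖₊ : ℝ≥0∞) ^ (-q') := by
          apply lintegral_congr; intro ζ
          simp only [hkzdef]
          rw [← ENNReal.rpow_mul, neg_one_mul]
      _ ≤ ∫⁻ ζ in Metric.ball z (2*d), (‖ζ - z‖₊ : ℝ≥0∞) ^ (-q') :=
          lintegral_mono_set inter_subset_right
      _ ≤ C₁ * ENNReal.ofReal ((2*d) ^ (-q' + 2)) := hC₁ z (2*d) (by positivity)
  have hsubw : 𝔻 ∩ B ⊆ Metric.ball w (3*d) := by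
    intro ζ hζ
    have h1 : dist ζ z < 2*d := Metric.mem_ball.mp hζ.2
    have h2 : dist z w = d := by rw [dist_eq_norm]
    rw [Metric.mem_ball]
    calc dist ζ w ≤ dist ζ z + dist z w := dist_triangle _ _ _
      _ < 3*d := by rw [h2]; linarith
  have hPw : ∫⁻ ζ in 𝔻 ∩ B, (‖g ζ‖₊ : ℝ≥0∞) * kw ζ
      ≤ G * (C₁ * ENNReal.ofReal ((3*d) ^ (-q' + 2))) ^ (1/q') := by
    refine (holder_piece hpq hg inter_subset_left _ (measurable_kernel w (-1))).trans ?_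
    refine mul_le_mul_right (ENNReal.rpow_le_rpow ?_ hq'inv) G
    calc ∫⁻ ζ in 𝔻 ∩ B, (kw ζ) ^ q'
        = ∫⁻ ζ in 𝔻 ∩ B, (‖ζ - w‖₊ : ℝ≥0∞) ^ (-q') := by
          apply lintegral_congr; intro ζ
          simp only [hkwdef]
          rw [← ENNReal.rpow_mul, neg_one_mul]
      _ ≤ ∫⁻ ζ in Metric.ball w (3*d), (‖ζ - w‖₊ : ℝ≥0∞) ^ (-q') :=
          lintegral_mono_set hsubw
      _ ≤ C₁ * ENNReal.ofReal ((3*d) ^ (-q' + 2)) := hC₁ w (3*d) (by positivity)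
  have hPfar : ∫⁻ ζ in 𝔻 \ B, (‖g ζ‖₊ : ℝ≥0∞) * kern ζ
      ≤ ENNReal.ofReal (2*d) *
        (G * (C₂ * ENNReal.ofReal ((2*d) ^ (-(2*q') + 2))) ^ (1/q')) := by
    calc ∫⁻ ζ in 𝔻 \ B, (‖g ζ‖₊ : ℝ≥0∞) * kern ζ
        ≤ ∫⁻ ζ in 𝔻 \ B, ENNReal.ofReal (2*d) *
            ((‖g ζ‖₊ : ℝ≥0∞) * (‖ζ - z‖₊ : ℝ≥0∞) ^ (-2:ℝ)) := by
          refine setLIntegral_mono' hmeasD fun ζ hζ => ?_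
          calc (‖g ζ‖₊ : ℝ≥0∞) * kern ζ
              ≤ (‖g ζ‖₊ : ℝ≥0∞) * (ENNReal.ofReal (2*d) * (‖ζ - z‖₊ : ℝ≥0∞) ^ (-2:ℝ)) :=
                mul_le_mul_right (hkern_far ζ hζ) _
            _ = ENNReal.ofReal (2*d) * ((‖g ζ‖₊ : ℝ≥0∞) * (‖ζ - z‖₊ : ℝ≥0∞) ^ (-2:ℝ)) := by
                ring
      _ = ENNReal.ofReal (2*d) *
            ∫⁻ ζ in 𝔻 \ B, (‖g ζ‖₊ : ℝ≥0∞) * (‖ζ - z‖₊ : ℝ≥0∞) ^ (-2:ℝ) :=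
          lintegral_const_mul' _ _ ENNReal.ofReal_ne_top
      _ ≤ ENNReal.ofReal (2*d) *
            (G * (∫⁻ ζ in 𝔻 \ B, ((‖ζ - z‖₊ : ℝ≥0∞) ^ (-2:ℝ)) ^ q') ^ (1/q')) :=
          mul_le_mul_right (holder_piece hpq hg diff_subset _ (measurable_kernel z (-2))) _
      _ ≤ ENNReal.ofReal (2*d) *
            (G * (C₂ * ENNReal.ofReal ((2*d) ^ (-(2*q') + 2))) ^ (1/q')) := by
          refine mul_le_mul_right (mul_le_mul_right
            (ENNReal.rpow_le_rpow ?_ hq'inv) G) _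
          calc ∫⁻ ζ in 𝔻 \ B, ((‖ζ - z‖₊ : ℝ≥0∞) ^ (-2:ℝ)) ^ q'
              = ∫⁻ ζ in 𝔻 \ B, (‖ζ - z‖₊ : ℝ≥0∞) ^ (-(2*q')) := by
                apply lintegral_congr; intro ζ
                rw [← ENNReal.rpow_mul]
                congr 1; ring
            _ ≤ ∫⁻ ζ in Bᶜ, (‖ζ - z‖₊ : ℝ≥0∞) ^ (-(2*q')) :=
                lintegral_mono_set (fun ζ hζ => hζ.2)
            _ ≤ C₂ * ENNReal.ofReal ((2*d) ^ (-(2*q') + 2)) := hC₂ z (2*d) (by positivity)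
  -- simplification of the three constants
  have h2d : (0:ℝ) < 2*d := by linarith
  have h3d : (0:ℝ) < 3*d := by linarith
  have hsimp1 : (C₁ * ENNReal.ofReal ((2*d) ^ (-q' + 2))) ^ (1/q')
      = C₁ ^ (1/q') * (ENNReal.ofReal ((2:ℝ) ^ α) * ENNReal.ofReal (d ^ α)) := by
    rw [ENNReal.mul_rpow_of_nonneg _ _ hq'inv,
      ENNReal.ofReal_rpow_of_pos (Real.rpow_pos_of_pos h2d _),
      ← Real.rpow_mul h2d.le, hexp1,
      Real.mul_rpow (by norm_num : (0:ℝ) ≤ 2) hd0.le, ENNReal.ofReal_mul (by positivity)]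
  have hsimp2 : (C₁ * ENNReal.ofReal ((3*d) ^ (-q' + 2))) ^ (1/q')
      = C₁ ^ (1/q') * (ENNReal.ofReal ((3:ℝ) ^ α) * ENNReal.ofReal (d ^ α)) := by
    rw [ENNReal.mul_rpow_of_nonneg _ _ hq'inv,
      ENNReal.ofReal_rpow_of_pos (Real.rpow_pos_of_pos h3d _),
      ← Real.rpow_mul h3d.le, hexp1,
      Real.mul_rpow (by norm_num : (0:ℝ) ≤ 3) hd0.le, ENNReal.ofReal_mul (by positivity)]
  have hsimp3 : ENNReal.ofReal (2*d) *
      (G * (C₂ * ENNReal.ofReal ((2*d) ^ (-(2*q') + 2))) ^ (1/q'))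
      = G * (C₂ ^ (1/q') * (ENNReal.ofReal ((2:ℝ) ^ α) * ENNReal.ofReal (d ^ α))) := by
    rw [ENNReal.mul_rpow_of_nonneg _ _ hq'inv,
      ENNReal.ofReal_rpow_of_pos (Real.rpow_pos_of_pos h2d _),
      ← Real.rpow_mul h2d.le]
    have hmul : (2*d) * ((2*d) ^ ((-(2*q') + 2) * (1/q'))) = (2*d) ^ α := by
      rw [← hexp2, Real.rpow_add h2d, Real.rpow_one]
    have h7 : ENNReal.ofReal (2*d) * ENNReal.ofReal ((2*d) ^ ((-(2*q') + 2) * (1/q')))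
        = ENNReal.ofReal ((2:ℝ) ^ α) * ENNReal.ofReal (d ^ α) := by
      rw [← ENNReal.ofReal_mul h2d.le, hmul,
        Real.mul_rpow (by norm_num : (0:ℝ) ≤ 2) hd0.le, ENNReal.ofReal_mul (by positivity)]
    rw [← h7]; ring
  have hmeas1 : AEMeasurable (fun ζ => (‖g ζ‖₊ : ℝ≥0∞) * kz ζ) (volume.restrict (𝔻 ∩ B)) :=
    ((hg.nnnorm.coe_nnreal_ennreal).mul (measurable_kernel z (-1))).aemeasurable
  have hmain : ∫⁻ ζ in 𝔻, (‖g ζ‖₊ : ℝ≥0∞) * kern ζ ≤ Ctot * ENNReal.ofReal (d ^ α) := by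
    calc ∫⁻ ζ in 𝔻, (‖g ζ‖₊ : ℝ≥0∞) * kern ζ
        = ∫⁻ ζ in (𝔻 ∩ B) ∪ (𝔻 \ B), (‖g ζ‖₊ : ℝ≥0∞) * kern ζ := by
          rw [inter_union_diff]
      _ ≤ (∫⁻ ζ in 𝔻 ∩ B, (‖g ζ‖₊ : ℝ≥0∞) * kern ζ)
          + ∫⁻ ζ in 𝔻 \ B, (‖g ζ‖₊ : ℝ≥0∞) * kern ζ := lintegral_union_le _ _ _
      _ ≤ (∫⁻ ζ in 𝔻 ∩ B, ((‖g ζ‖₊ : ℝ≥0∞) * kz ζ + (‖g ζ‖₊ : ℝ≥0∞) * kw ζ))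
          + ∫⁻ ζ in 𝔻 \ B, (‖g ζ‖₊ : ℝ≥0∞) * kern ζ := by
          refine add_le_add_left (lintegral_mono fun ζ => ?_) _
          rw [← mul_add]
          exact mul_le_mul_right (hkern_le ζ) _
      _ = ((∫⁻ ζ in 𝔻 ∩ B, (‖g ζ‖₊ : ℝ≥0∞) * kz ζ)
          + ∫⁻ ζ in 𝔻 ∩ B, (‖g ζ‖₊ : ℝ≥0∞) * kw ζ)
          + ∫⁻ ζ in 𝔻 \ B, (‖g ζ‖₊ : ℝ≥0∞) * kern ζ := by
          rw [lintegral_add_left' hmeas1]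
      _ ≤ (G * (C₁ * ENNReal.ofReal ((2*d) ^ (-q' + 2))) ^ (1/q')
          + G * (C₁ * ENNReal.ofReal ((3*d) ^ (-q' + 2))) ^ (1/q'))
          + ENNReal.ofReal (2*d) *
            (G * (C₂ * ENNReal.ofReal ((2*d) ^ (-(2*q') + 2))) ^ (1/q')) :=
          add_le_add (add_le_add hPz hPw) hPfar
      _ = Ctot * ENNReal.ofReal (d ^ α) := by
          rw [hsimp1, hsimp2, hsimp3, hCtotdef]; ring
  calc ‖T g z - T g w‖
      ≤ (1/Real.pi) * (∫⁻ ζ in 𝔻, (‖g ζ‖₊ : ℝ≥0∞) * kern ζ).toReal := hstepA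
    _ ≤ (1/Real.pi) * (Ctot * ENNReal.ofReal (d ^ α)).toReal := by
        refine mul_le_mul_of_nonneg_left (ENNReal.toReal_mono
          (ENNReal.mul_ne_top hCtotTop ENNReal.ofReal_ne_top) hmain) (by positivity)
    _ = (1/Real.pi) * Ctot.toReal * d ^ α := by
        rw [ENNReal.toReal_mul, ENNReal.toReal_ofReal (Real.rpow_nonneg hd0.le _)]; ring
    _ ≤ ((1/Real.pi) * Ctot.toReal + 1) * d ^ α := by
        have h8 : (0:ℝ) ≤ d ^ α := Real.rpow_nonneg hd0.le _
        have h9 : (0:ℝ) ≤ (1/Real.pi) * Ctot.toReal := by positivity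
        nlinarith

lemma abs_le_sqrt2_bnorm (a b : ℂ) : ‖a‖ ≤ Real.sqrt 2 * bnorm a b := by
  rw [bnorm, ← Real.sqrt_mul (by norm_num : (0:ℝ) ≤ 2)]
  calc ‖a‖ = Real.sqrt (‖a‖ ^ 2) :=
        (Real.sqrt_sq (norm_nonneg a)).symm
    _ ≤ Real.sqrt (2 * ((‖a‖ ^ 2 + ‖b‖ ^ 2) / 2)) :=
        Real.sqrt_le_sqrt (by nlinarith [sq_nonneg (‖b‖)])

lemma bnorm_le_add (a b : ℂ) : bnorm a b ≤ ‖a‖ + ‖b‖ := by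
  rw [bnorm, show ‖a‖ + ‖b‖
      = Real.sqrt ((‖a‖ + ‖b‖) ^ 2) from (Real.sqrt_sq (by positivity)).symm]
  apply Real.sqrt_le_sqrt
  nlinarith [norm_nonneg a, norm_nonneg b]

/-- for `f ∈ L^q(D,𝔹)` with `q > 2`, `T_𝔹(f)` is Hölder continuous of
order `α = (q−2)/q` on the closed unit disk. -/
theorem stmt8 (q : ℝ) (hq : 2 < q) (fp fm : ℂ → ℂ)
    (hfp : Measurable fp) (hfm : Measurable fm)
    (hLq : IntegrableOn (fun z => bnorm (fp z) (fm z) ^ q) 𝔻) :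
    ∃ C : ℝ, 0 < C ∧ ∀ z ∈ Metric.closedBall (0 : ℂ) 1, ∀ w ∈ Metric.closedBall (0 : ℂ) 1,
      bnorm (Tp fp z - Tp fp w) (T fm z - T fm w) ≤
        C * ‖z - w‖ ^ ((q - 2) / q) := by
  have hq0 : (0:ℝ) < q := by linarith
  have hbn : ∀ ζ, 0 ≤ bnorm (fp ζ) (fm ζ) := fun ζ => Real.sqrt_nonneg _
  have hfin : (∫⁻ ζ in 𝔻, ENNReal.ofReal (bnorm (fp ζ) (fm ζ) ^ q)) < ∞ := by
    have h := hLq.2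
    have h2 : ∀ ζ, ENNReal.ofReal (bnorm (fp ζ) (fm ζ) ^ q)
        = (‖bnorm (fp ζ) (fm ζ) ^ q‖₊ : ℝ≥0∞) := by
      intro ζ
      rw [← ofReal_norm_eq_coe_nnnorm, Real.norm_of_nonneg (Real.rpow_nonneg (hbn ζ) q)]
    calc ∫⁻ ζ in 𝔻, ENNReal.ofReal (bnorm (fp ζ) (fm ζ) ^ q)
        = ∫⁻ ζ in 𝔻, (‖bnorm (fp ζ) (fm ζ) ^ q‖₊ : ℝ≥0∞) := lintegral_congr h2
      _ < ∞ := h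
  have hcomp : ∀ (g : ℂ → ℂ), (∀ ζ, ‖g ζ‖ ≤ Real.sqrt 2 * bnorm (fp ζ) (fm ζ)) →
      (∫⁻ ζ in 𝔻, (‖g ζ‖₊ : ℝ≥0∞) ^ q) ≠ ∞ := by
    intro g hgle
    have hpt : ∀ ζ, (‖g ζ‖₊ : ℝ≥0∞) ^ q
        ≤ ENNReal.ofReal ((Real.sqrt 2) ^ q) * ENNReal.ofReal (bnorm (fp ζ) (fm ζ) ^ q) := by
      intro ζ
      rw [← ofReal_norm_eq_coe_nnnorm, ENNReal.ofReal_rpow_of_nonneg (norm_nonneg _) hq0.le,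
        ← ENNReal.ofReal_mul (by positivity),
        ← Real.mul_rpow (Real.sqrt_nonneg 2) (hbn ζ)]
      exact ENNReal.ofReal_le_ofReal
        (Real.rpow_le_rpow (norm_nonneg _) (hgle ζ) hq0.le)
    refine ne_of_lt ?_
    calc ∫⁻ ζ in 𝔻, (‖g ζ‖₊ : ℝ≥0∞) ^ q
        ≤ ∫⁻ ζ in 𝔻, ENNReal.ofReal ((Real.sqrt 2) ^ q) *
            ENNReal.ofReal (bnorm (fp ζ) (fm ζ) ^ q) := lintegral_mono hpt
      _ = ENNReal.ofReal ((Real.sqrt 2) ^ q) *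
            ∫⁻ ζ in 𝔻, ENNReal.ofReal (bnorm (fp ζ) (fm ζ) ^ q) :=
          lintegral_const_mul' _ _ ENNReal.ofReal_ne_top
      _ < ∞ := ENNReal.mul_lt_top ENNReal.ofReal_lt_top hfin
  have habs1 : ∀ ζ, ‖(starRingEnd ℂ) (fp ζ)‖ ≤ Real.sqrt 2 * bnorm (fp ζ) (fm ζ) := by
    intro ζ
    rw [Complex.norm_conj]
    exact abs_le_sqrt2_bnorm _ _
  have habs2 : ∀ ζ, ‖fm ζ‖ ≤ Real.sqrt 2 * bnorm (fp ζ) (fm ζ) := by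
    intro ζ
    have h := abs_le_sqrt2_bnorm (fm ζ) (fp ζ)
    have hsymm : bnorm (fm ζ) (fp ζ) = bnorm (fp ζ) (fm ζ) := by rw [bnorm, bnorm]; ring_nf
    rw [hsymm] at h
    exact h
  obtain ⟨Ca, hCa0, hCa⟩ := Tdiff_core hq
    (g := fun ζ => (starRingEnd ℂ) (fp ζ))
    (Complex.continuous_conj.measurable.comp hfp) (hcomp _ habs1)
  obtain ⟨Cb, hCb0, hCb⟩ := Tdiff_core hq (g := fm) hfm (hcomp _ habs2)
  refine ⟨Ca + Cb, by positivity, ?_⟩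
  intro z hz w hw
  have hTp : Tp fp z - Tp fp w = (starRingEnd ℂ)
      (T (fun ζ => (starRingEnd ℂ) (fp ζ)) z - T (fun ζ => (starRingEnd ℂ) (fp ζ)) w) := by
    rw [Tp, Tp, map_sub]
  have h1 : ‖Tp fp z - Tp fp w‖ ≤ Ca * ‖z - w‖ ^ ((q-2)/q) := by
    rw [hTp, Complex.norm_conj]
    exact hCa z hz w hw
  have h2 : ‖T fm z - T fm w‖ ≤ Cb * ‖z - w‖ ^ ((q-2)/q) := by
    exact hCb z hz w hw
  calc bnorm (Tp fp z - Tp fp w) (T fm z - T fm w)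
      ≤ ‖Tp fp z - Tp fp w‖ + ‖T fm z - T fm w‖ := bnorm_le_add _ _
    _ ≤ Ca * ‖z - w‖ ^ ((q-2)/q) + Cb * ‖z - w‖ ^ ((q-2)/q) :=
        add_le_add h1 h2
    _ = (Ca + Cb) * ‖z - w‖ ^ ((q-2)/q) := (add_mul _ _ _).symm
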